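/- Let φ be a flat ADT formula in negation normal form with size constraints over a well-defined ADT, let φ₀, φ₁, … be an unfolding sequence for φ, and let Uᵢ be the set of variables unfolded in φᵢ (U₀ = ∅, and Uᵢ = Uᵢ₋₁ ∪ {x} if φᵢ was derived by unfolding x). If the reduct φ̃ᵢ is satisfied over EUF+LIA by a model M̃ and assignment β̃ such that for every ADT variable x : σ of φᵢ there is a variable y ∈ Uᵢ with y : σ and val_{M̃,β̃}(x̃) = val_{M̃,β̃}(ỹ), then φ is satisfiable over the ADT with size. -/

import Mathlib

/-!
Reduction of ADT constraints **with size constraints** to EUF+LIA: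
soundness for unsatisfiability (Lemma 1 of the paper).
-/

structure ADTSig where
  numSorts : ℕ
  numCtors : ℕ
  ctorArgs : Fin numCtors → List (Fin numSorts)
  ctorRes : Fin numCtors → Fin numSorts

namespace ADTSig

inductive Term (S : ADTSig) : Fin S.numSorts → Type where
  | mk (f : Fin S.numCtors)
      (args : (i : Fin (S.ctorArgs f).length) → Term S ((S.ctorArgs f).get i)) :
      Term S (S.ctorRes f)

/-- The size `|t|` of a constructor term: the number of constructor
occurrences. -/
def Term.size {S : ADTSig} : {σ : Fin S.numSorts} → Term S σ → ℕ
  | _, .mk _ args => 1 + ∑ i, (args i).size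

def Term.head {S : ADTSig} : {σ : Fin S.numSorts} → Term S σ → Fin S.numCtors
  | _, .mk f _ => f

def WellDefined (S : ADTSig) : Prop := ∀ σ, Nonempty (S.Term σ)

structure SelInterp (S : ADTSig) where
  sel : (f : Fin S.numCtors) → (i : Fin (S.ctorArgs f).length) →
    S.Term (S.ctorRes f) → S.Term ((S.ctorArgs f).get i)
  sel_mk : ∀ f i args, sel f i (Term.mk f args) = args i

/-! ### Presburger formulas (for the size constraints) -/

inductive PTerm (n : ℕ) where
  | cst (c : ℤ)
  | var (i : Fin n)
  | add (s t : PTerm n)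
  | smul (c : ℤ) (t : PTerm n)

def PTerm.eval {n : ℕ} (ρ : Fin n → ℤ) : PTerm n → ℤ
  | .cst c => c
  | .var i => ρ i
  | .add s t => s.eval ρ + t.eval ρ
  | .smul c t => c * t.eval ρ

inductive PForm : ℕ → Type where
  | le {n} (s t : PTerm n) : PForm n
  | peq {n} (s t : PTerm n) : PForm n
  | not {n} (φ : PForm n) : PForm n
  | and {n} (φ ψ : PForm n) : PForm n
  | or {n} (φ ψ : PForm n) : PForm n
  | ex {n} (φ : PForm (n + 1)) : PForm n

def PForm.eval : {n : ℕ} → (Fin n → ℤ) → PForm n → Prop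
  | _, ρ, .le s t => s.eval ρ ≤ t.eval ρ
  | _, ρ, .peq s t => s.eval ρ = t.eval ρ
  | _, ρ, .not φ => ¬ φ.eval ρ
  | _, ρ, .and φ ψ => φ.eval ρ ∧ ψ.eval ρ
  | _, ρ, .or φ ψ => φ.eval ρ ∨ ψ.eval ρ
  | _, ρ, .ex φ => ∃ z : ℤ, φ.eval (Fin.cons z ρ)

/-! ### Flat formulas with size constraints -/

/-- Literals of flat ADT formulas with size constraints: as in the size-free
case, plus Presburger constraints `φ_Pres(|x₁|,…,|x_n|)` on the sizes of
(the terms assigned to) variables. -/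
inductive Lit (S : ADTSig) (V : Fin S.numSorts → Type) where
  | ctorEq (f : Fin S.numCtors)
      (xs : (i : Fin (S.ctorArgs f).length) → V ((S.ctorArgs f).get i))
      (x0 : V (S.ctorRes f))
  | selEq (f : Fin S.numCtors) (j : Fin (S.ctorArgs f).length)
      (x : V (S.ctorRes f)) (y : V ((S.ctorArgs f).get j))
  | tst (f : Fin S.numCtors) (x : V (S.ctorRes f))
  | ntst (f : Fin S.numCtors) (x : V (S.ctorRes f))
  | eqv {σ : Fin S.numSorts} (x y : V σ)
  | nev {σ : Fin S.numSorts} (x y : V σ)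
  | sizeC {n : ℕ} (xs : Fin n → Σ σ, V σ) (P : PForm n)

inductive Formula (S : ADTSig) (V : Fin S.numSorts → Type) where
  | fls
  | lit (l : Lit S V)
  | and (φ ψ : Formula S V)
  | or (φ ψ : Formula S V)

variable {S : ADTSig} {V : Fin S.numSorts → Type}

def Lit.holds (I : SelInterp S) (β : (σ : Fin S.numSorts) → V σ → S.Term σ) :
    Lit S V → Prop
  | .ctorEq f xs x0 => Term.mk f (fun i => β _ (xs i)) = β _ x0
  | .selEq f j x y => I.sel f j (β _ x) = β _ y
  | .tst f x => (β _ x).head = f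
  | .ntst f x => (β _ x).head ≠ f
  | .eqv x y => β _ x = β _ y
  | .nev x y => β _ x ≠ β _ y
  | .sizeC xs P => P.eval (fun i => ((β (xs i).1 (xs i).2).size : ℤ))

def Formula.holds (I : SelInterp S) (β : (σ : Fin S.numSorts) → V σ → S.Term σ) :
    Formula S V → Prop
  | .fls => False
  | .lit l => l.holds I β
  | .and φ ψ => φ.holds I β ∧ ψ.holds I β
  | .or φ ψ => φ.holds I β ∨ ψ.holds I β

def Formula.ADTSat (φ : Formula S V) : Prop :=
  ∃ (I : SelInterp S) (β : (σ : Fin S.numSorts) → V σ → S.Term σ), φ.holds I β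

/-! ### The EUF+LIA side, with size functions -/

/-- An EUF+LIA model for the vocabulary of the reduction with size: `size_σ`
replaces `depth_σ`. -/
structure RModel (S : ADTSig) where
  ctorF : (f : Fin S.numCtors) → (Fin (S.ctorArgs f).length → ℤ) → ℤ
  selF : (f : Fin S.numCtors) → Fin (S.ctorArgs f).length → ℤ → ℤ
  ctorIdF : Fin S.numSorts → ℤ → ℤ
  sizeF : Fin S.numSorts → ℤ → ℤ

def ctorIndex (S : ADTSig) (f : Fin S.numCtors) : ℤ :=
  ((Finset.univ.filter
      (fun g : Fin S.numCtors => g ≤ f ∧ S.ctorRes g = S.ctorRes f)).card : ℤ)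

def InSort (S : ADTSig) (σ : Fin S.numSorts) (x : ℤ) : Prop :=
  Finite (S.Term σ) → (0 ≤ x ∧ x < (Nat.card (S.Term σ) : ℤ))

/-- The size image `𝕊_σ` of a sort, as a set of integers. -/
def SizeImageZ (S : ADTSig) (σ : Fin S.numSorts) : Set ℤ :=
  {z | ∃ t : S.Term σ, (t.size : ℤ) = z}

/-- `CtorSpec′_f(x₀,…,x_n)` of Table II. -/
def CtorSpec' (M : RModel S) (f : Fin S.numCtors) (x0 : ℤ)
    (xs : Fin (S.ctorArgs f).length → ℤ) : Prop :=
  M.ctorF f xs = x0 ∧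
  M.ctorIdF (S.ctorRes f) x0 = ctorIndex S f ∧
  (∀ j, M.selF f j x0 = xs j ∧
     M.sizeF ((S.ctorArgs f).get j) (xs j) ∈ SizeImageZ S ((S.ctorArgs f).get j)) ∧
  M.sizeF (S.ctorRes f) x0 = 1 + ∑ j, M.sizeF ((S.ctorArgs f).get j) (xs j)

def ExCtorSpec' (M : RModel S) (f : Fin S.numCtors) (x : ℤ) : Prop :=
  ∃ xs : Fin (S.ctorArgs f).length → ℤ,
    (∀ j, InSort S ((S.ctorArgs f).get j) (xs j)) ∧ CtorSpec' M f x xs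

/-- The reduct of a literal: rules (1)–(6) with `CtorSpec′`, and rule (7) for
size literals (`|x| ≈ y` becomes `size_σ(x̃) ≈ y ∧ y ∈ 𝕊_σ`). -/
def Lit.redHolds (M : RModel S) (β : (σ : Fin S.numSorts) → V σ → ℤ) :
    Lit S V → Prop
  | .ctorEq f xs x0 => CtorSpec' M f (β _ x0) (fun i => β _ (xs i))
  | .selEq f j x y => M.selF f j (β _ x) = β _ y ∧
      ∃ g, S.ctorRes g = S.ctorRes f ∧ ExCtorSpec' M g (β _ x)
  | .tst f x => ExCtorSpec' M f (β _ x)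
  | .ntst f x => ∃ g, S.ctorRes g = S.ctorRes f ∧ g ≠ f ∧ ExCtorSpec' M g (β _ x)
  | .eqv x y => β _ x = β _ y
  | .nev x y => β _ x ≠ β _ y
  | .sizeC xs P =>
      P.eval (fun i => M.sizeF (xs i).1 (β (xs i).1 (xs i).2)) ∧
      ∀ i, M.sizeF (xs i).1 (β (xs i).1 (xs i).2) ∈ SizeImageZ S (xs i).1

def Formula.redHolds (M : RModel S) (β : (σ : Fin S.numSorts) → V σ → ℤ) :
    Formula S V → Prop
  | .fls => False
  | .lit l => l.redHolds M β
  | .and φ ψ => φ.redHolds M β ∧ ψ.redHolds M β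
  | .or φ ψ => φ.redHolds M β ∨ ψ.redHolds M β

def Formula.RedSat (φ : Formula S V) : Prop :=
  ∃ (M : RModel S) (β : (σ : Fin S.numSorts) → V σ → ℤ),
    φ.redHolds M β ∧ ∀ σ (x : V σ), InSort S σ (β σ x)


/-! ### Variables and unfolding -/

/-- The list of (sorted) variables occurring in a literal. -/
def Lit.varList : Lit S V → List (Σ σ, V σ)
  | .ctorEq _ xs x0 => ⟨_, x0⟩ :: List.ofFn (fun i => ⟨_, xs i⟩)
  | .selEq _ _ x y => [⟨_, x⟩, ⟨_, y⟩]
  | .tst _ x => [⟨_, x⟩]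
  | .ntst _ x => [⟨_, x⟩]
  | .eqv x y => [⟨_, x⟩, ⟨_, y⟩]
  | .nev x y => [⟨_, x⟩, ⟨_, y⟩]
  | .sizeC xs _ => List.ofFn xs

/-- The list of (sorted) variables occurring in a formula. -/
def Formula.varList : Formula S V → List (Σ σ, V σ)
  | .fls => []
  | .lit l => l.varList
  | .and φ ψ => φ.varList ++ ψ.varList
  | .or φ ψ => φ.varList ++ ψ.varList

/-- The disjunction `⋁_{f_j : σ} f_j(x₁ʲ, x₂ʲ, …) ≈ x` over all constructors
of sort `σ`, with argument variables `fresh`. -/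
def unfoldDisj (σ : Fin S.numSorts) (x : V σ)
    (fresh : (f : Fin S.numCtors) → (i : Fin (S.ctorArgs f).length) →
       V ((S.ctorArgs f).get i)) : Formula S V :=
  ((List.finRange S.numCtors).map (fun f =>
      if h : S.ctorRes f = σ then
        Formula.lit (Lit.ctorEq f (fresh f) (cast (congrArg V h.symm) x))
      else Formula.fls)).foldr Formula.or Formula.fls

/-- `φ'` is obtained from `φ` by unfolding the variable `u` (which occurs in
`φ`), using pairwise distinct fresh argument variables. -/
def IsUnfoldStepAt (φ φ' : Formula S V) (u : Σ σ, V σ) : Prop :=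
  ∃ fresh : (f : Fin S.numCtors) → (i : Fin (S.ctorArgs f).length) →
      V ((S.ctorArgs f).get i),
    u ∈ φ.varList ∧
    (∀ f i, (⟨_, fresh f i⟩ : Σ σ, V σ) ∉ φ.varList) ∧
    (∀ f i f' i', (⟨_, fresh f i⟩ : Σ σ, V σ) = ⟨_, fresh f' i'⟩ →
       (⟨f, i⟩ : Σ f : Fin S.numCtors, Fin (S.ctorArgs f).length) = ⟨f', i'⟩) ∧
    φ' = φ.and (unfoldDisj u.1 u.2 fresh)


end ADTSig

namespace ADTSig

variable {S : ADTSig} {V : Fin S.numSorts → Type}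

lemma Term.one_le_size {σ : Fin S.numSorts} (t : S.Term σ) : 1 ≤ t.size := by
  cases t with
  | mk f args => simp [Term.size]

lemma one_le_of_mem_sizeImage {σ : Fin S.numSorts} {z : ℤ}
    (h : z ∈ SizeImageZ S σ) : 1 ≤ z := by
  obtain ⟨t, ht⟩ := h
  have := t.one_le_size
  omega

lemma ctorIdx_lt {f g : Fin S.numCtors} (hfg : f < g)
    (hres : S.ctorRes f = S.ctorRes g) : ctorIndex S f < ctorIndex S g := by
  unfold ctorIndex
  have : (Finset.univ.filter
      (fun h : Fin S.numCtors => h ≤ f ∧ S.ctorRes h = S.ctorRes f)) ⊂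
      (Finset.univ.filter
      (fun h : Fin S.numCtors => h ≤ g ∧ S.ctorRes h = S.ctorRes g)) := by
    constructor
    · intro a ha
      simp only [Finset.mem_filter, Finset.mem_univ, true_and] at *
      exact ⟨ha.1.trans hfg.le, ha.2.trans hres⟩
    · intro hsub
      have hg : g ∈ Finset.univ.filter
          (fun h : Fin S.numCtors => h ≤ g ∧ S.ctorRes h = S.ctorRes g) := by
        simp
      have := hsub hg
      simp only [Finset.mem_filter, Finset.mem_univ, true_and] at this
      exact absurd this.1 (not_le.2 hfg)
  exact_mod_cast Finset.card_lt_card this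

lemma ctorIdx_inj {f g : Fin S.numCtors} (hres : S.ctorRes f = S.ctorRes g)
    (h : ctorIndex S f = ctorIndex S g) : f = g := by
  rcases lt_trichotomy f g with hlt | he | hlt
  · exact absurd h (ne_of_lt (ctorIdx_lt hlt hres))
  · exact he
  · exact absurd h.symm (ne_of_lt (ctorIdx_lt hlt hres.symm))

lemma CtorSpec'_ctor_eq {M : RModel S} {f g : Fin S.numCtors} {v : ℤ}
    {c : Fin (S.ctorArgs f).length → ℤ} {d : Fin (S.ctorArgs g).length → ℤ}
    (hres : S.ctorRes f = S.ctorRes g)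
    (h1 : CtorSpec' M f v c) (h2 : CtorSpec' M g v d) : f = g := by
  apply ctorIdx_inj hres
  have e1 := h1.2.1
  have e2 := h2.2.1
  rw [hres] at e1
  rw [e1] at e2
  exact e2

end ADTSig
namespace ADTSig

variable {S : ADTSig} {V : Fin S.numSorts → Type}

lemma head_cast {σ τ : Fin S.numSorts} (h : σ = τ) (t : S.Term σ) :
    (h ▸ t : S.Term τ).head = t.head := by subst h; rfl

lemma size_cast {σ τ : Fin S.numSorts} (h : σ = τ) (t : S.Term σ) :
    (h ▸ t : S.Term τ).size = t.size := by subst h; rfl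

/-- Decoding a term back to an integer, using the model's constructor
functions. -/
noncomputable def dec (M : RModel S) : {σ : Fin S.numSorts} → S.Term σ → ℤ
  | _, .mk f args => M.ctorF f (fun k => dec M (args k))

lemma dec_cast (M : RModel S) {σ τ : Fin S.numSorts} (h : σ = τ) (t : S.Term σ) :
    dec M (h ▸ t : S.Term τ) = dec M t := by subst h; rfl

section Build

variable (M : RModel S) (Cov : (σ : Fin S.numSorts) → ℤ → Prop)

structure StepFun where
  F : ∀ σ v, Cov σ v → Fin S.numCtors
  hres : ∀ σ v h, S.ctorRes (F σ v h) = σ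
  C : ∀ σ v h, Fin (S.ctorArgs (F σ v h)).length → ℤ
  hspec : ∀ σ v h, CtorSpec' M (F σ v h) v (C σ v h)
  hcov : ∀ σ v h k, Cov ((S.ctorArgs (F σ v h)).get k) (C σ v h k)

variable (hS : S.WellDefined) (D : StepFun M Cov)

open scoped Classical in
noncomputable def build : ℕ → ∀ σ : Fin S.numSorts, ℤ → S.Term σ
  | 0, σ, _ => Classical.choice (hS σ)
  | n+1, σ, v =>
    if h : Cov σ v then
      D.hres σ v h ▸ Term.mk (D.F σ v h) (fun k => build n _ (D.C σ v h k))
    else Classical.choice (hS σ)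

variable {M Cov}

lemma child_size_one_le {σ v} (h : Cov σ v) (k) :
    1 ≤ M.sizeF ((S.ctorArgs (D.F σ v h)).get k) (D.C σ v h k) :=
  one_le_of_mem_sizeImage ((D.hspec σ v h).2.2.1 k).2

include D in
lemma sizeF_one_le {σ v} (h : Cov σ v) : 1 ≤ M.sizeF σ v := by
  have e := (D.hspec σ v h).2.2.2
  rw [D.hres σ v h] at e
  have h2 : (0:ℤ) ≤ ∑ k, M.sizeF ((S.ctorArgs (D.F σ v h)).get k) (D.C σ v h k) :=
    Finset.sum_nonneg (fun k _ => le_trans zero_le_one (child_size_one_le D h k))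
  omega

lemma child_size_lt {σ v} (h : Cov σ v) (k) :
    M.sizeF ((S.ctorArgs (D.F σ v h)).get k) (D.C σ v h k) < M.sizeF σ v := by
  have e := (D.hspec σ v h).2.2.2
  rw [D.hres σ v h] at e
  have hle : M.sizeF ((S.ctorArgs (D.F σ v h)).get k) (D.C σ v h k) ≤
      ∑ j, M.sizeF ((S.ctorArgs (D.F σ v h)).get j) (D.C σ v h j) :=
    Finset.single_le_sum
      (fun j _ => le_trans zero_le_one (child_size_one_le D h j))
      (Finset.mem_univ k)
  omega

/-- The rank used for termination: the (truncated) size value. -/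
noncomputable def rank (M : RModel S) (σ : Fin S.numSorts) (v : ℤ) : ℕ :=
  (M.sizeF σ v).toNat

lemma child_rank_lt {σ v} (h : Cov σ v) (k) :
    rank M ((S.ctorArgs (D.F σ v h)).get k) (D.C σ v h k) < rank M σ v := by
  have h1 := child_size_lt D h k
  have h2 := child_size_one_le D h k
  unfold rank
  omega

include D in
lemma one_le_rank {σ v} (h : Cov σ v) : 1 ≤ rank M σ v := by
  have := sizeF_one_le D h
  unfold rank
  omega

lemma build_stable : ∀ n m (σ : Fin S.numSorts) v, Cov σ v →
    rank M σ v ≤ n → rank M σ v ≤ m →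
    build M Cov hS D n σ v = build M Cov hS D m σ v := by
  intro n
  induction n using Nat.strong_induction_on with
  | _ n ih =>
    intro m σ v h hn hm
    have h1 := one_le_rank D h
    obtain ⟨n', rfl⟩ : ∃ n', n = n' + 1 := ⟨n - 1, by omega⟩
    obtain ⟨m', rfl⟩ : ∃ m', m = m' + 1 := ⟨m - 1, by omega⟩
    simp only [build]
    rw [dif_pos h, dif_pos h]
    have harg : (fun k => build M Cov hS D n' ((S.ctorArgs (D.F σ v h)).get k) (D.C σ v h k))
        = (fun k => build M Cov hS D m' ((S.ctorArgs (D.F σ v h)).get k) (D.C σ v h k)) := by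
      funext k
      exact ih n' (by omega) m' _ _ (D.hcov σ v h k)
        (by have := child_rank_lt D h k; omega)
        (by have := child_rank_lt D h k; omega)
    rw [harg]

/-- The canonical term assigned to a value. -/
noncomputable def T (σ : Fin S.numSorts) (v : ℤ) : S.Term σ :=
  build M Cov hS D (rank M σ v) σ v

lemma build_eq_T {n σ v} (h : Cov σ v) (hn : rank M σ v ≤ n) :
    build M Cov hS D n σ v = T hS D σ v :=
  build_stable hS D n _ σ v h hn le_rfl

lemma T_unfold {σ v} (h : Cov σ v) :
    T hS D σ v = D.hres σ v h ▸
      Term.mk (D.F σ v h) (fun k => T hS D _ (D.C σ v h k)) := by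
  have h1 := one_le_rank D h
  obtain ⟨r, hr⟩ : ∃ r, rank M σ v = r + 1 := ⟨rank M σ v - 1, by omega⟩
  show build M Cov hS D (rank M σ v) σ v = _
  rw [hr]
  simp only [build]
  rw [dif_pos h]
  have harg : (fun k => build M Cov hS D r ((S.ctorArgs (D.F σ v h)).get k) (D.C σ v h k))
      = (fun k => T hS D ((S.ctorArgs (D.F σ v h)).get k) (D.C σ v h k)) := by
    funext k
    exact build_eq_T hS D (D.hcov σ v h k)
      (by have := child_rank_lt D h k; omega)
  rw [harg]

lemma T_size : ∀ n (σ : Fin S.numSorts) v, Cov σ v → rank M σ v ≤ n →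
    (((T hS D σ v).size : ℤ)) = M.sizeF σ v := by
  intro n
  induction n using Nat.strong_induction_on with
  | _ n ih =>
    intro σ v h hn
    have h1 := one_le_rank D h
    rw [T_unfold hS D h, size_cast]
    simp only [Term.size]
    have e := (D.hspec σ v h).2.2.2
    rw [D.hres σ v h] at e
    rw [e]
    push_cast
    congr 1
    apply Finset.sum_congr rfl
    intro k _
    exact ih (n-1) (by omega) _ _ (D.hcov σ v h k)
      (by have := child_rank_lt D h k; omega)

lemma T_dec : ∀ n (σ : Fin S.numSorts) v, Cov σ v → rank M σ v ≤ n →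
    dec M (T hS D σ v) = v := by
  intro n
  induction n using Nat.strong_induction_on with
  | _ n ih =>
    intro σ v h hn
    have h1 := one_le_rank D h
    rw [T_unfold hS D h, dec_cast]
    simp only [dec]
    have harg : (fun k => dec M (T hS D ((S.ctorArgs (D.F σ v h)).get k) (D.C σ v h k)))
        = D.C σ v h := by
      funext k
      exact ih (n-1) (by omega) _ _ (D.hcov σ v h k)
        (by have := child_rank_lt D h k; omega)
    rw [harg]
    exact (D.hspec σ v h).1

lemma T_inj {σ : Fin S.numSorts} {v w : ℤ} (hv : Cov σ v) (hw : Cov σ w)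
    (h : T hS D σ v = T hS D σ w) : v = w := by
  rw [← T_dec hS D (rank M σ v) σ v hv le_rfl,
    ← T_dec hS D (rank M σ w) σ w hw le_rfl, h]

/-- Unfolding `T` with *any* constructor specification data, via uniqueness. -/
lemma T_unfold' {σ : Fin S.numSorts} {v : ℤ} (h : Cov σ v)
    {f : Fin S.numCtors} {c : Fin (S.ctorArgs f).length → ℤ}
    (hσ : S.ctorRes f = σ) (hc : CtorSpec' M f v c) :
    T hS D σ v = hσ ▸ Term.mk f (fun k => T hS D _ (c k)) := by
  have hf : D.F σ v h = f :=
    CtorSpec'_ctor_eq ((D.hres σ v h).trans hσ.symm) (D.hspec σ v h) hc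
  subst hf
  have hcc : c = D.C σ v h := by
    funext k
    exact (hc.2.2.1 k).1.symm.trans ((D.hspec σ v h).2.2.1 k).1
  subst hcc
  exact T_unfold hS D h

lemma T_head' {σ : Fin S.numSorts} {v : ℤ} (h : Cov σ v)
    {f : Fin S.numCtors} {c : Fin (S.ctorArgs f).length → ℤ}
    (hσ : S.ctorRes f = σ) (hc : CtorSpec' M f v c) :
    (T hS D σ v).head = f := by
  rw [T_unfold' hS D h hσ hc, head_cast]
  rfl

end Build

end ADTSig
namespace ADTSig

variable {S : ADTSig} {V : Fin S.numSorts → Type}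

def headArgs : {σ : Fin S.numSorts} → S.Term σ →
    Σ' (f : Fin S.numCtors) (_ : S.ctorRes f = σ),
      ∀ i, S.Term ((S.ctorArgs f).get i)
  | _, .mk f args => ⟨f, rfl, args⟩

lemma headArgs_fst {σ : Fin S.numSorts} (t : S.Term σ) :
    (headArgs t).1 = t.head := by cases t; rfl

lemma headArgs_cast {σ τ : Fin S.numSorts} (h : σ = τ) (t : S.Term σ) :
    headArgs (h ▸ t : S.Term τ)
      = ⟨(headArgs t).1, (headArgs t).2.1.trans h, (headArgs t).2.2⟩ := by
  subst h; rfl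

open scoped Classical in
/-- The selector interpretation used to witness ADT satisfiability. -/
noncomputable def mkSel (hS : S.WellDefined) (M : RModel S)
    (Cov : (σ : Fin S.numSorts) → ℤ → Prop) (T0 : ∀ σ, ℤ → S.Term σ) :
    SelInterp S where
  sel f j t :=
    if h : (headArgs t).1 = f then
      (h ▸ (headArgs t).2.2 : ∀ i, S.Term ((S.ctorArgs f).get i)) j
    else if h2 : ∃ v, Cov (S.ctorRes f) v ∧ T0 (S.ctorRes f) v = t then
      T0 _ (M.selF f j h2.choose)
    else Classical.choice (hS _)
  sel_mk f j args := dif_pos rfl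

lemma mkSel_of_mk (hS : S.WellDefined) (M : RModel S)
    (Cov : (σ : Fin S.numSorts) → ℤ → Prop) (T0 : ∀ σ, ℤ → S.Term σ)
    {f : Fin S.numCtors} (j : Fin (S.ctorArgs f).length)
    {t : S.Term (S.ctorRes f)}
    (a : ∀ k : Fin (S.ctorArgs f).length, S.Term ((S.ctorArgs f).get k))
    (ht : t = Term.mk f a) :
    (mkSel hS M Cov T0).sel f j t = a j := by
  rw [ht]
  exact (mkSel hS M Cov T0).sel_mk f j a

open scoped Classical in
lemma mkSel_of_ne (hS : S.WellDefined) (M : RModel S)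
    (Cov : (σ : Fin S.numSorts) → ℤ → Prop) (T0 : ∀ σ, ℤ → S.Term σ)
    {f : Fin S.numCtors} (j : Fin (S.ctorArgs f).length)
    {t : S.Term (S.ctorRes f)}
    (hne : t.head ≠ f)
    {v : ℤ} (hv : Cov (S.ctorRes f) v) (hTv : T0 (S.ctorRes f) v = t)
    (hinj : ∀ w, Cov (S.ctorRes f) w → T0 (S.ctorRes f) w = T0 (S.ctorRes f) v → w = v) :
    (mkSel hS M Cov T0).sel f j t = T0 _ (M.selF f j v) := by
  have h1 : ¬ ((headArgs t).1 = f) := by rw [headArgs_fst]; exact hne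
  have h2 : ∃ w, Cov (S.ctorRes f) w ∧ T0 (S.ctorRes f) w = t := ⟨v, hv, hTv⟩
  show (if h : (headArgs t).1 = f then _ else _) = _
  rw [dif_neg h1, dif_pos h2]
  congr 1
  have hc := h2.choose_spec
  rw [hinj h2.choose hc.1 (hc.2.trans hTv.symm)]

end ADTSig
namespace ADTSig

variable {S : ADTSig} {V : Fin S.numSorts → Type}

lemma redHolds_foldr_or {M : RModel S} {β : (σ : Fin S.numSorts) → V σ → ℤ}
    (l : List (Formula S V)) :
    ((l.foldr Formula.or Formula.fls).redHolds M β) ↔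
      ∃ χ ∈ l, χ.redHolds M β := by
  induction l with
  | nil => simp [Formula.redHolds]
  | cons a l ih =>
    simp only [List.foldr_cons, List.mem_cons]
    constructor
    · rintro (h | h)
      · exact ⟨a, Or.inl rfl, h⟩
      · obtain ⟨χ, hm, hh⟩ := ih.1 h
        exact ⟨χ, Or.inr hm, hh⟩
    · rintro ⟨χ, hm | hm, hh⟩
      · exact Or.inl (hm ▸ hh)
      · exact Or.inr (ih.2 ⟨χ, hm, hh⟩)

lemma varList_foldr_or {χ : Formula S V} (l : List (Formula S V)) (h : χ ∈ l) :
    ∀ p ∈ χ.varList, p ∈ (l.foldr Formula.or Formula.fls).varList := by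
  induction l with
  | nil => cases h
  | cons a l ih =>
    intro p hp
    rcases List.mem_cons.1 h with rfl | hm
    · exact List.mem_append_left _ hp
    · exact List.mem_append_right _ (ih hm p hp)

lemma unfold_red {M : RModel S} {β : (σ : Fin S.numSorts) → V σ → ℤ}
    {σ : Fin S.numSorts} {x : V σ}
    {fresh : (f : Fin S.numCtors) → (i : Fin (S.ctorArgs f).length) →
       V ((S.ctorArgs f).get i)}
    (h : (unfoldDisj σ x fresh).redHolds M β) :
    ∃ (f : Fin S.numCtors) (_ : S.ctorRes f = σ),
      CtorSpec' M f (β σ x) (fun k => β _ (fresh f k)) ∧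
      ∀ k, (⟨_, fresh f k⟩ : Σ σ, V σ) ∈ (unfoldDisj σ x fresh).varList := by
  unfold unfoldDisj at h
  rw [redHolds_foldr_or] at h
  obtain ⟨χ, hχmem, hχ⟩ := h
  rw [List.mem_map] at hχmem
  obtain ⟨f, -, rfl⟩ := hχmem
  by_cases hf : S.ctorRes f = σ
  · refine ⟨f, hf, ?_, ?_⟩
    · rw [dif_pos hf] at hχ
      subst hf
      exact hχ
    · intro k
      apply varList_foldr_or
      · exact List.mem_map_of_mem (List.mem_finRange f)
      · rw [dif_pos hf]
        show _ ∈ Lit.varList _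
        unfold Lit.varList
        apply List.mem_cons_of_mem
        rw [List.mem_ofFn]
        exact ⟨k, rfl⟩
  · rw [dif_neg hf] at hχ
    exact absurd hχ (by simp [Formula.redHolds])

end ADTSig
namespace ADTSig

section Transfer

variable {S : ADTSig} {V : Fin S.numSorts → Type}
variable {M : RModel S} {Cov : (σ : Fin S.numSorts) → ℤ → Prop}
variable (hS : S.WellDefined) (D : StepFun M Cov)
variable {β : (σ : Fin S.numSorts) → V σ → ℤ}

lemma lit_transfer (l : Lit S V)
    (hv : ∀ p ∈ l.varList, Cov p.1 (β p.1 p.2))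
    (hl : l.redHolds M β) :
    l.holds (mkSel hS M Cov (T hS D)) (fun σ x => T hS D σ (β σ x)) := by
  cases l with
  | ctorEq f xs x0 =>
      have hx0 : Cov _ (β _ x0) := hv ⟨_, x0⟩ (by simp [Lit.varList])
      exact (T_unfold' hS D hx0 rfl hl).symm
  | selEq f j x y =>
      obtain ⟨hsel, g, hg, cs, _, hcs⟩ := hl
      have hx : Cov _ (β _ x) := hv ⟨_, x⟩ (by simp [Lit.varList])
      show (mkSel hS M Cov (T hS D)).sel f j (T hS D _ (β _ x)) = T hS D _ (β _ y)
      by_cases hgf : g = f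
      · subst hgf
        rw [mkSel_of_mk hS M Cov (T hS D) j _ (T_unfold' hS D hx hg hcs)]
        have : cs j = β _ y := (hcs.2.2.1 j).1.symm.trans hsel
        rw [this]
      · have hne : (T hS D (S.ctorRes f) (β _ x)).head ≠ f := by
          rw [T_head' hS D hx hg hcs]; exact hgf
        rw [mkSel_of_ne hS M Cov (T hS D) j hne hx rfl
          (fun w hw he => T_inj hS D hw hx he), hsel]
  | tst f x =>
      obtain ⟨cs, _, hcs⟩ := hl
      have hx : Cov _ (β _ x) := hv ⟨_, x⟩ (by simp [Lit.varList])
      show (T hS D _ (β _ x)).head = f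
      exact T_head' hS D hx rfl hcs
  | ntst f x =>
      obtain ⟨g, hg, hgf, cs, _, hcs⟩ := hl
      have hx : Cov _ (β _ x) := hv ⟨_, x⟩ (by simp [Lit.varList])
      show (T hS D _ (β _ x)).head ≠ f
      rw [T_head' hS D hx hg hcs]
      exact hgf
  | eqv x y =>
      show T hS D _ (β _ x) = T hS D _ (β _ y)
      rw [hl]
  | nev x y =>
      have hx : Cov _ (β _ x) := hv ⟨_, x⟩ (by simp [Lit.varList])
      have hy : Cov _ (β _ y) := hv ⟨_, y⟩ (by simp [Lit.varList])
      intro he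
      exact hl (T_inj hS D hx hy he)
  | sizeC xs P =>
      obtain ⟨hP, -⟩ := hl
      show P.eval _
      have he : (fun k => ((T hS D (xs k).1 (β (xs k).1 (xs k).2)).size : ℤ))
           = (fun k => M.sizeF (xs k).1 (β (xs k).1 (xs k).2)) := by
        funext k
        exact T_size hS D (rank M _ _) _ _
          (hv (xs k) (by unfold Lit.varList; rw [List.mem_ofFn]; exact ⟨k, rfl⟩))
          le_rfl
      show P.eval (fun k => ((T hS D (xs k).1 (β (xs k).1 (xs k).2)).size : ℤ))
      rw [he]
      exact hP

lemma formula_transfer (χ : Formula S V)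
    (hv : ∀ p ∈ χ.varList, Cov p.1 (β p.1 p.2))
    (hχ : χ.redHolds M β) :
    χ.holds (mkSel hS M Cov (T hS D)) (fun σ x => T hS D σ (β σ x)) := by
  induction χ with
  | fls => exact hχ
  | lit l => exact lit_transfer hS D l hv hχ
  | and φ ψ ihφ ihψ =>
      exact ⟨ihφ (fun p hp => hv p (List.mem_append_left _ hp)) hχ.1,
        ihψ (fun p hp => hv p (List.mem_append_right _ hp)) hχ.2⟩
  | or φ ψ ihφ ihψ =>
      rcases hχ with h | h
      · exact Or.inl (ihφ (fun p hp => hv p (List.mem_append_left _ hp)) h)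
      · exact Or.inr (ihψ (fun p hp => hv p (List.mem_append_right _ hp)) h)

end Transfer

end ADTSig

open ADTSig in
/-- **Lemma 2 (2).** For any unfolding sequence `φ₀, φ₁, …` of a flat ADT
formula `φ` in NNF with size constraints, with `Uᵢ = {us j | j < i}` the set of
variables unfolded in `φᵢ`: if the reduct `φ̃ᵢ` is satisfied over EUF+LIA by a
model `M` and assignment `β` such that every ADT variable of `φᵢ` takes the
same value as some already-unfolded variable of the same sort, then `φ` is
satisfiable over the ADT with size. -/
theorem unfolding_complete (S : ADTSig) (hS : S.WellDefined)
    (V : Fin S.numSorts → Type) (φ : Formula S V)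
    (ψ : ℕ → Formula S V) (us : ℕ → Σ σ, V σ)
    (h0 : ψ 0 = φ)
    (hstep : ∀ i, IsUnfoldStepAt (ψ i) (ψ (i + 1)) (us i))
    (i : ℕ) (M : RModel S) (β : (σ : Fin S.numSorts) → V σ → ℤ)
    (hsat : (ψ i).redHolds M β)
    (hIn : ∀ σ (x : V σ), InSort S σ (β σ x))
    (hcover : ∀ σ (x : V σ), (⟨σ, x⟩ : Σ σ, V σ) ∈ (ψ i).varList →
       ∃ j < i, (us j).1 = σ ∧ β (us j).1 (us j).2 = β σ x) :
    φ.ADTSat := by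
  classical
  -- `redHolds` descends along the unfolding sequence
  have hdesc : ∀ j, (ψ (j+1)).redHolds M β → (ψ j).redHolds M β := by
    intro j h
    obtain ⟨fresh, -, -, -, heq⟩ := hstep j
    rw [heq] at h
    exact h.1
  have hred' : ∀ k, (ψ (i - k)).redHolds M β := by
    intro k
    induction k with
    | zero => simpa using hsat
    | succ k ih =>
      rcases lt_or_ge k i with hk | hk
      · have h2 := hdesc (i - (k+1))
        rw [show i - (k+1) + 1 = i - k by omega] at h2
        exact h2 ih
      · rw [show i - (k+1) = i - k by omega]
        exact ih
  have hred : ∀ j, j ≤ i → (ψ j).redHolds M β := by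
    intro j hj
    have h2 := hred' (i - j)
    rwa [show i - (i - j) = j by omega] at h2
  -- variable lists grow along the unfolding sequence
  have hup : ∀ j (p : Σ σ, V σ), p ∈ (ψ j).varList → p ∈ (ψ (j+1)).varList := by
    intro j p hp
    obtain ⟨fresh, -, -, -, heq⟩ := hstep j
    rw [heq]
    exact List.mem_append_left _ hp
  have hvadd : ∀ j k (p : Σ σ, V σ), p ∈ (ψ j).varList → p ∈ (ψ (j + k)).varList := by
    intro j k p hp
    induction k with
    | zero => exact hp
    | succ k ih => exact hup (j + k) p ih
  have hvmono : ∀ j, j ≤ i → ∀ p ∈ (ψ j).varList, p ∈ (ψ i).varList := by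
    intro j hj p hp
    have h2 := hvadd j (i - j) p hp
    rwa [show j + (i - j) = i by omega] at h2
  -- the covering predicate
  set Cov : (σ : Fin S.numSorts) → ℤ → Prop :=
    fun σ v => ∃ j < i, (us j).1 = σ ∧ β (us j).1 (us j).2 = v with hCovDef
  have hdata : ∀ σ v, Cov σ v → ∃ (f : Fin S.numCtors) (_ : S.ctorRes f = σ)
      (c : Fin (S.ctorArgs f).length → ℤ),
      CtorSpec' M f v c ∧ ∀ k, Cov ((S.ctorArgs f).get k) (c k) := by
    rintro σ v ⟨j, hj, hσ, hv⟩
    obtain ⟨fresh, -, -, -, heq⟩ := hstep j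
    have h1 : (ψ (j+1)).redHolds M β := hred (j+1) (by omega)
    rw [heq] at h1
    obtain ⟨f, hf, hspec, hmem⟩ := unfold_red h1.2
    subst hσ
    subst hv
    refine ⟨f, hf, _, hspec, ?_⟩
    intro k
    have hm : (⟨_, fresh f k⟩ : Σ σ, V σ) ∈ (ψ i).varList :=
      hvmono (j+1) (by omega) _ (by rw [heq]; exact List.mem_append_right _ (hmem k))
    exact hcover _ _ hm
  choose F hF C hspec' hcov' using hdata
  set D : StepFun M Cov := ⟨F, hF, C, hspec', hcov'⟩ with hD
  refine ⟨mkSel hS M Cov (T hS D), fun σ x => T hS D σ (β σ x), ?_⟩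
  apply formula_transfer hS D
  · intro p hp
    have hm : p ∈ (ψ i).varList := hvmono 0 (by omega) p (by rw [h0]; exact hp)
    exact hcover p.1 p.2 hm
  · exact h0 ▸ hred 0 (by omega)
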